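/- Let β ∈ (0,1), B > 0, C > 0, L > 0, T ≥ 1, and let r_1,…,r_T be nonnegative real numbers satisfying Σ_{t=1}^T r_t ≤ C·√(B·(Σ_{t=1}^T r_t^β)·L) + C·L. Then Σ_{t=1}^T r_t ≤ (1/c_{1/(2−β)})·(4C²·c_{1/2}²·c_β·B·L)^{1/(2−β)}·T^{(1−β)/(2−β)} + 2C·L, where c_α = (1−α)^{1−α}·α^α for α ∈ (0,1). -/

import Mathlib

/-- Deterministic core of Theorem 3 (case `β < 1`): if nonnegative reals `r_1,…,r_T` satisfy
`Σ r_t ≤ C·√(B·(Σ r_t^β)·L) + C·L`, then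
`Σ r_t ≤ (1/c_{1/(2-β)})·(4C²·c_{1/2}²·c_β·B·L)^{1/(2-β)}·T^{(1-β)/(2-β)} + 2C·L`,
where `c_α = (1-α)^(1-α)·α^α`. -/
theorem stmt_2 (β B C L : ℝ) (hβ : β ∈ Set.Ioo (0 : ℝ) 1) (hB : 0 < B) (hC : 0 < C)
    (hL : 0 < L) (T : ℕ) (hT : 1 ≤ T) (r : Fin T → ℝ) (hr : ∀ t, 0 ≤ r t)
    (h : ∑ t, r t ≤ C * Real.sqrt (B * (∑ t, r t ^ β) * L) + C * L) :
    ∑ t, r t ≤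
      (1 / ((1 - 1 / (2 - β)) ^ (1 - 1 / (2 - β)) * (1 / (2 - β)) ^ (1 / (2 - β)))) *
          (4 * C ^ 2 * ((1 - 1 / 2 : ℝ) ^ (1 - 1 / 2 : ℝ) * (1 / 2 : ℝ) ^ (1 / 2 : ℝ)) ^ 2 *
              ((1 - β) ^ (1 - β) * β ^ β) * B * L) ^ (1 / (2 - β)) *
          (T : ℝ) ^ ((1 - β) / (2 - β)) +
        2 * C * L := by
  obtain ⟨hβ0, hβ1⟩ := hβ
  have h2β : (0:ℝ) < 2 - β := by linarith
  have h1β : (0:ℝ) < 1 - β := by linarith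
  have hT0 : (0:ℝ) < (T:ℝ) := by exact_mod_cast hT
  set S : ℝ := ∑ t, r t with hSdef
  have hS0 : 0 ≤ S := Finset.sum_nonneg fun t _ => hr t
  set γ : ℝ := 1 / (2 - β) with hγdef
  have hγ0 : 0 < γ := by positivity
  have hγ1 : γ < 1 := by rw [hγdef, div_lt_one h2β]; linarith
  have h1γ : (0:ℝ) < 1 - γ := by linarith
  set α : ℝ := β / 2 with hαdef
  have hα0 : 0 < α := by positivity
  have h1α : (0:ℝ) < 1 - α := by rw [hαdef]; linarith
  set D : ℝ := B * L * (T:ℝ) ^ (1 - β) with hDdef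
  have hTr : (0:ℝ) < (T:ℝ) ^ (1 - β) := Real.rpow_pos_of_pos hT0 _
  have hD0 : 0 < D := by rw [hDdef]; positivity
  set a : ℝ := C * D ^ (1/2 : ℝ) with hadef
  have ha0 : 0 < a := mul_pos hC (Real.rpow_pos_of_pos hD0 _)
  set lam : ℝ := (2 * a * α) ^ (1 / (1 - α)) with hlamdef
  have hbase : (0:ℝ) < 2 * a * α := by positivity
  have hlam0 : 0 < lam := Real.rpow_pos_of_pos hbase _
  -- Step 1 (Jensen): ∑ r^β ≤ T^(1-β) * S^β
  have hQ : (∑ t, r t ^ β) ≤ (T:ℝ) ^ (1 - β) * S ^ β := by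
    have hmean := Real.arith_mean_le_rpow_mean Finset.univ (fun _ => (T:ℝ)⁻¹)
      (fun t => r t ^ β) (fun i _ => by positivity)
      (by simp [Finset.card_univ, mul_inv_cancel₀ hT0.ne'])
      (fun i _ => Real.rpow_nonneg (hr i) _) (p := 1/β)
      (by rw [le_div_iff₀ hβ0]; linarith)
    have hz : ∀ t, (r t ^ β) ^ (1/β : ℝ) = r t := by
      intro t
      rw [← Real.rpow_mul (hr t), mul_one_div, div_self hβ0.ne', Real.rpow_one]
    simp only [hz, one_div_one_div] at hmean
    rw [← Finset.mul_sum, ← Finset.mul_sum, ← hSdef,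
      Real.mul_rpow (inv_nonneg.mpr hT0.le) hS0] at hmean
    have h2 := mul_le_mul_of_nonneg_left hmean hT0.le
    calc (∑ t, r t ^ β) = (T:ℝ) * ((T:ℝ)⁻¹ * ∑ t, r t ^ β) := by
          field_simp
      _ ≤ (T:ℝ) * ((T:ℝ)⁻¹ ^ (β:ℝ) * S ^ β) := h2
      _ = (T:ℝ) ^ (1 - β) * S ^ β := by
          rw [Real.inv_rpow hT0.le, Real.rpow_sub hT0, Real.rpow_one]
          field_simp
  -- Step 2: S ≤ a * S^α + C*L
  have key1 : S ≤ a * S ^ α + C * L := by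
    have hsq : Real.sqrt (B * (∑ t, r t ^ β) * L) ≤ D ^ (1/2 : ℝ) * S ^ α := by
      have h1 : B * (∑ t, r t ^ β) * L ≤ D * S ^ β := by
        rw [hDdef]
        have := mul_le_mul_of_nonneg_left hQ (mul_pos hB hL).le
        calc B * (∑ t, r t ^ β) * L = B * L * (∑ t, r t ^ β) := by ring
          _ ≤ B * L * ((T:ℝ) ^ (1 - β) * S ^ β) := this
          _ = B * L * (T:ℝ) ^ (1 - β) * S ^ β := by ring
      calc Real.sqrt (B * (∑ t, r t ^ β) * L) ≤ Real.sqrt (D * S ^ β) :=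
            Real.sqrt_le_sqrt h1
        _ = D ^ (1/2 : ℝ) * S ^ α := by
            rw [Real.sqrt_eq_rpow, Real.mul_rpow hD0.le (Real.rpow_nonneg hS0 _),
              ← Real.rpow_mul hS0, show β * (1/2) = α by rw [hαdef]; ring]
    calc S ≤ C * Real.sqrt (B * (∑ t, r t ^ β) * L) + C * L := h
      _ ≤ C * (D ^ (1/2 : ℝ) * S ^ α) + C * L := by
          have := mul_le_mul_of_nonneg_left hsq hC.le
          linarith
      _ = a * S ^ α + C * L := by rw [hadef]; ring
  -- Step 3: the λ-trick
  have hlam1 : lam ^ (α - 1) = (2 * a * α)⁻¹ := by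
    rw [hlamdef, ← Real.rpow_mul hbase.le]
    have : 1 / (1 - α) * (α - 1) = -1 := by field_simp; ring
    rw [this, Real.rpow_neg_one]
  have hlamα : lam ^ α = lam * (2 * a * α)⁻¹ := by
    have h1 : lam ^ α = lam ^ ((1:ℝ) + (α - 1)) := by norm_num
    rw [h1, Real.rpow_add hlam0, Real.rpow_one, hlam1]
  have young : S ^ α * lam ^ (1 - α) ≤ α * S + (1 - α) * lam :=
    Real.geom_mean_le_arith_mean2_weighted hα0.le h1α.le hS0 hlam0.le (by ring)
  have hSα : S ^ α ≤ (α * S + (1 - α) * lam) * lam ^ (α - 1) := by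
    have h1 : S ^ α = S ^ α * lam ^ (1 - α) * lam ^ (α - 1) := by
      rw [mul_assoc, ← Real.rpow_add hlam0]
      have : (1 - α) + (α - 1) = 0 := by ring
      rw [this, Real.rpow_zero, mul_one]
    rw [h1]
    exact mul_le_mul_of_nonneg_right young (Real.rpow_nonneg hlam0.le _)
  have key : S ≤ 2 * (a * (1 - α) * lam ^ α) + 2 * (C * L) := by
    have h2 : a * S ^ α ≤ a * ((α * S + (1 - α) * lam) * lam ^ (α - 1)) :=
      mul_le_mul_of_nonneg_left hSα ha0.le
    have h3 : a * ((α * S + (1 - α) * lam) * lam ^ (α - 1)) =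
        S / 2 + a * (1 - α) * lam ^ α := by
      rw [hlam1, hlamα]
      field_simp
    linarith [key1]
  -- Step 4: identify the constant
  have hc12 : ((1 - 1 / 2 : ℝ) ^ (1 - 1 / 2 : ℝ) * (1 / 2 : ℝ) ^ (1 / 2 : ℝ)) ^ 2
      = 1 / 4 := by
    rw [show (1 - 1/2 : ℝ) = 1/2 by norm_num, ← Real.rpow_add (by norm_num : (0:ℝ) < 1/2)]
    norm_num
  rw [hc12]
  have hX : (4 * C ^ 2 * (1/4 : ℝ) * ((1 - β) ^ (1 - β) * β ^ β) * B * L)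
      = C ^ 2 * ((1 - β) ^ (1 - β) * β ^ β) * B * L := by ring
  rw [hX]
  set cγ : ℝ := (1 - γ) ^ (1 - γ) * γ ^ γ with hcγdef
  set cβ : ℝ := (1 - β) ^ (1 - β) * β ^ β with hcβdef
  have hcγ0 : 0 < cγ := mul_pos (Real.rpow_pos_of_pos h1γ _) (Real.rpow_pos_of_pos hγ0 _)
  have hcβ0 : 0 < cβ := mul_pos (Real.rpow_pos_of_pos h1β _) (Real.rpow_pos_of_pos hβ0 _)
  have hX0 : (0:ℝ) < C ^ 2 * cβ * B * L := by positivity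
  have hM0 : (0:ℝ) < 1 / cγ * (C ^ 2 * cβ * B * L) ^ γ * (T:ℝ) ^ ((1 - β) / (2 - β)) := by
    have := Real.rpow_pos_of_pos hX0 γ
    have := Real.rpow_pos_of_pos hT0 ((1 - β) / (2 - β))
    positivity
  have hR0 : (0:ℝ) < 2 * (a * (1 - α) * lam ^ α) := by
    have := Real.rpow_pos_of_pos hlam0 α
    positivity
  have hM : 1 / cγ * (C ^ 2 * cβ * B * L) ^ γ * (T:ℝ) ^ ((1 - β) / (2 - β))
      = 2 * (a * (1 - α) * lam ^ α) := by
    refine Real.log_injOn_pos (Set.mem_Ioi.mpr hM0) (Set.mem_Ioi.mpr hR0) ?_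
    have hloga : Real.log a = Real.log C + 1/2 * (Real.log B + Real.log L
        + (1 - β) * Real.log (T:ℝ)) := by
      rw [hadef, Real.log_mul hC.ne' (Real.rpow_pos_of_pos hD0 _).ne',
        Real.log_rpow hD0, hDdef, Real.log_mul (mul_pos hB hL).ne' hTr.ne',
        Real.log_mul hB.ne' hL.ne', Real.log_rpow hT0]
    have hloglam : Real.log lam = 1 / (1 - α) * (Real.log 2 + Real.log a
        + Real.log α) := by
      rw [hlamdef, Real.log_rpow hbase, Real.log_mul (by positivity : (2*a:ℝ) ≠ 0) hα0.ne',
        Real.log_mul (two_ne_zero) ha0.ne']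
    have hlogα : Real.log α = Real.log β - Real.log 2 := by
      rw [hαdef, Real.log_div hβ0.ne' two_ne_zero]
    have hlog1α : Real.log (1 - α) = Real.log (2 - β) - Real.log 2 := by
      rw [show (1 - α : ℝ) = (2 - β) / 2 by rw [hαdef]; ring,
        Real.log_div h2β.ne' two_ne_zero]
    have hlogγ : Real.log γ = -Real.log (2 - β) := by
      rw [hγdef, one_div, Real.log_inv]
    have hlog1γ : Real.log (1 - γ) = Real.log (1 - β) - Real.log (2 - β) := by
      rw [show (1 - γ : ℝ) = (1 - β) / (2 - β) by rw [hγdef]; field_simp; ring,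
        Real.log_div h1β.ne' h2β.ne']
    have hlogcγ : Real.log cγ = (1 - γ) * Real.log (1 - γ) + γ * Real.log γ := by
      rw [hcγdef, Real.log_mul (Real.rpow_pos_of_pos h1γ _).ne'
        (Real.rpow_pos_of_pos hγ0 _).ne', Real.log_rpow h1γ, Real.log_rpow hγ0]
    have hlogcβ : Real.log cβ = (1 - β) * Real.log (1 - β) + β * Real.log β := by
      rw [hcβdef, Real.log_mul (Real.rpow_pos_of_pos h1β _).ne'
        (Real.rpow_pos_of_pos hβ0 _).ne', Real.log_rpow h1β, Real.log_rpow hβ0]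
    have hlogM : Real.log (1 / cγ * (C ^ 2 * cβ * B * L) ^ γ
        * (T:ℝ) ^ ((1 - β) / (2 - β)))
        = -Real.log cγ + γ * (2 * Real.log C + Real.log cβ + Real.log B + Real.log L)
          + (1 - β) / (2 - β) * Real.log (T:ℝ) := by
      rw [Real.log_mul (by positivity) (Real.rpow_pos_of_pos hT0 _).ne',
        Real.log_mul (by positivity) (Real.rpow_pos_of_pos hX0 _).ne',
        Real.log_rpow hX0, Real.log_rpow hT0, one_div, Real.log_inv,
        Real.log_mul (by positivity) hL.ne', Real.log_mul (by positivity) hB.ne',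
        Real.log_mul (by positivity) hcβ0.ne', Real.log_pow]
      push_cast
      ring_nf
    have hlogR : Real.log (2 * (a * (1 - α) * lam ^ α))
        = Real.log 2 + Real.log a + Real.log (1 - α) + α * Real.log lam := by
      rw [Real.log_mul two_ne_zero (by positivity : (a * (1 - α) * lam ^ α : ℝ) ≠ 0),
        Real.log_mul (by positivity : (a * (1 - α) : ℝ) ≠ 0)
          (Real.rpow_pos_of_pos hlam0 _).ne',
        Real.log_mul ha0.ne' h1α.ne', Real.log_rpow hlam0]
      ring
    rw [hlogM, hlogR, hlogcγ, hlogcβ, hloglam, hlogα, hlog1α, hlogγ, hlog1γ, hloga,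
      hγdef, hαdef]
    field_simp
    ring
  linarith [key, hM]
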